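/- Consider an anonymous game G = (I, λ, V, (A_i)_{i∈I}, J). Let η̄ ∈ P(V) disintegrate with respect to (A_i)_{i∈I} and λ via a Markov kernel κ, and assume the map a ↦ J(a, η̄) is Borel measurable, integrable with respect to η̄, and such that i ↦ ∫ J(a,η̄) dκ_i(a) is λ-integrable. Let Ψ be an admissible profile such that for λ-a.e. i, Ψ(i) minimizes a ↦ J(a, η̄) over A_i, and assume J(·,η̄) is integrable with respect to Ψ♯λ. Then ∫ J(a, η̄) dη̄(a) ≥ ∫ J(a, η̄) d(Ψ♯λ)(a). -/

import Mathlib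

open MeasureTheory ProbabilityTheory

/-- If `η̄` disintegrates over the action sets via a Markov kernel `κ`, and `Ψ` is an
admissible profile which best-responds to `η̄` almost everywhere, then
`∫ J(a,η̄) dη̄ ≥ ∫ J(a,η̄) d(Ψ♯λ)`. -/
theorem disintegration_best_response_integral_le
    {I V : Type*} [MeasurableSpace I] [MetricSpace V] [MeasurableSpace V] [BorelSpace V]
    (lam : Measure I) [IsProbabilityMeasure lam]
    (A : I → Set V) (hA : ∀ i, (A i).Nonempty)
    (J : V → Measure V → ℝ)
    (ηb : Measure V) [IsProbabilityMeasure ηb]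
    (κ : ProbabilityTheory.Kernel I V) [ProbabilityTheory.IsMarkovKernel κ]
    (hκA : ∀ᵐ i ∂lam, κ i (A i) = 1)
    (hdis : ηb = lam.bind (fun i => κ i))
    (hJmeas : Measurable (fun a => J a ηb))
    (hJint : Integrable (fun a => J a ηb) ηb)
    (hJintκ : Integrable (fun i => ∫ a, J a ηb ∂(κ i)) lam)
    (Ψ : I → V) (hΨmeas : Measurable Ψ)
    (hΨ : ∀ᵐ i ∂lam, Ψ i ∈ A i ∧ ∀ b ∈ A i, J (Ψ i) ηb ≤ J b ηb)
    (hJintmap : Integrable (fun a => J a ηb) (Measure.map Ψ lam)) :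
    ∫ a, J a ηb ∂ηb ≥ ∫ a, J a ηb ∂(Measure.map Ψ lam) := by
  set f := fun a => J a ηb with hf
  -- `η̄` is the second marginal of `lam ⊗ₘ κ`.
  have hbind : ηb = (lam.compProd κ).map Prod.snd := by
    rw [hdis]
    ext s hs
    rw [Measure.map_apply measurable_snd hs,
      Measure.compProd_apply (measurable_snd hs),
      Measure.bind_apply hs (Kernel.measurable κ).aemeasurable]
    rfl
  -- Integrability of `(i,a) ↦ J a η̄` on the product.
  have hJintProd : Integrable (fun p : I × V => f p.2) (lam.compProd κ) := by
    have := hJint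
    rw [hbind] at this
    exact (integrable_map_measure hJmeas.aestronglyMeasurable
      measurable_snd.aemeasurable).mp this
  -- a.e. integrability in each fiber.
  have hfiber : ∀ᵐ i ∂lam, Integrable (fun a => f a) (κ i) := by
    have := (Measure.integrable_compProd_iff
      (hJmeas.comp measurable_snd).aestronglyMeasurable).mp hJintProd
    exact this.1
  -- rewrite both sides
  have hL : ∫ a, f a ∂ηb = ∫ i, ∫ a, f a ∂(κ i) ∂lam := by
    rw [hbind, integral_map measurable_snd.aemeasurable hJmeas.aestronglyMeasurable,
      Measure.integral_compProd hJintProd]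
  have hR : ∫ a, J a ηb ∂(Measure.map Ψ lam) = ∫ i, J (Ψ i) ηb ∂lam := by
    rw [integral_map hΨmeas.aemeasurable hJmeas.aestronglyMeasurable]
  rw [hL, hR, ge_iff_le]
  have hΨintlam : Integrable (fun i => J (Ψ i) ηb) lam := by
    exact (integrable_map_measure hJmeas.aestronglyMeasurable hΨmeas.aemeasurable).mp hJintmap
  refine integral_mono_ae hΨintlam hJintκ ?_
  filter_upwards [hκA, hΨ, hfiber] with i hκi ⟨hΨA, hbest⟩ hint
  -- on a set of full κ i measure, `J (Ψ i) η̄ ≤ J a η̄`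
  have hS : κ i {b | J (Ψ i) ηb ≤ J b ηb} = 1 := by
    have hsub : A i ⊆ {b | J (Ψ i) ηb ≤ J b ηb} := fun b hb => hbest b hb
    have h1 : (1 : ENNReal) ≤ κ i {b | J (Ψ i) ηb ≤ J b ηb} :=
      hκi ▸ measure_mono hsub
    exact le_antisymm prob_le_one h1
  have hae : ∀ᵐ a ∂(κ i), J (Ψ i) ηb ≤ J a ηb := by
    rw [ae_iff]
    have : {a | ¬ J (Ψ i) ηb ≤ J a ηb} = {b | J (Ψ i) ηb ≤ J b ηb}ᶜ := by
      ext a; simp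
    rw [this]
    have hmeas : MeasurableSet {b | J (Ψ i) ηb ≤ J b ηb} :=
      measurableSet_le measurable_const hJmeas
    rw [measure_compl hmeas (measure_ne_top _ _), hS, measure_univ]
    simp
  calc J (Ψ i) ηb = ∫ _, J (Ψ i) ηb ∂(κ i) := by simp
    _ ≤ ∫ a, J a ηb ∂(κ i) := integral_mono_ae (integrable_const _) hint hae
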